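/- (Generalized Jacobi identity, second form) Let L be a Lie algebra, X_1,...,X_m ∈ L, and v = v_1⋯v_ℓ a word of length ℓ ≥ 2 in {1,...,m}. Then the left-nested bracket satisfies X_v = (1/ℓ) Σ_{σ ∈ S_ℓ} π_ℓ(σ) X_{σ_1(v)⋯σ_ℓ(v)}, i.e., ℓ·X_v = Σ_{σ ∈ S_ℓ} π_ℓ(σ) X_{σ(v)}. -/

import Mathlib

/-- The coefficient `π_ℓ` evaluated on the word `σ(1)σ(2)⋯σ(ℓ)` (letters `0,…,ℓ-1`),
defined inductively: value `1` on a single letter; if the word starts with the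
smallest letter `0`, recurse on the remaining (shifted) word; if it ends with `0`,
recurse with a sign change; otherwise the value is `0`. -/
def piW : List ℕ → ℤ
  | [] => 0
  | [_] => 1
  | a :: b :: l =>
    if a = 0 then piW ((b :: l).map (· - 1))
    else if (a :: b :: l).getLast? = some 0 then
      - piW ((a :: b :: l).dropLast.map (· - 1))
    else 0
termination_by w => w.length
decreasing_by all_goals (simp; try omega)

/-- `π_ℓ(σ)` for a permutation `σ` of `ℓ` letters. -/
def piPerm {ℓ : ℕ} (σ : Equiv.Perm (Fin ℓ)) : ℤ :=
  piW ((List.finRange ℓ).map (fun j => (σ j : ℕ)))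

/-- Left-nested Lie bracket of a list: `[x₁,[x₂,…,[x_{k-1},x_k]…]]`. -/
def nestedBracket {L : Type*} [LieRing L] : List L → L
  | [] => 0
  | [x] => x
  | x :: y :: l => ⁅x, nestedBracket (y :: l)⁆

namespace GJAux

open Equiv List

/-! ### Basic bracket helpers -/

variable {L : Type*} [LieRing L]

/-- Iterated adjoint action along a list. -/
def adList : List L → L → L
  | [], a => a
  | x :: l, a => ⁅x, adList l a⁆

@[simp] lemma adList_nil (a : L) : adList [] a = a := rfl

@[simp] lemma adList_cons (x : L) (l : List L) (a : L) :
    adList (x :: l) a = ⁅x, adList l a⁆ := rfl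

lemma adList_concat (l : List L) (x a : L) :
    adList (l ++ [x]) a = adList l ⁅x, a⁆ := by
  induction l with
  | nil => rfl
  | cons y l ih => simp [ih]

lemma nestedBracket_cons₂ (x y : L) (l : List L) :
    nestedBracket (x :: y :: l) = ⁅x, nestedBracket (y :: l)⁆ := by
  rw [nestedBracket]

lemma nestedBracket_cons_of_ne_nil (x : L) (l : List L) (h : l ≠ []) :
    nestedBracket (x :: l) = ⁅x, nestedBracket l⁆ := by
  cases l with
  | nil => exact absurd rfl h
  | cons y l => exact nestedBracket_cons₂ x y l

lemma nestedBracket_concat (l : List L) (a : L) :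
    nestedBracket (l ++ [a]) = adList l a := by
  induction l with
  | nil => rfl
  | cons x l ih =>
    rw [List.cons_append, nestedBracket_cons_of_ne_nil x (l ++ [a]) (by simp), ih,
      adList_cons]

lemma lie_sum' {ι : Type*} (x : L) (s : Finset ι) (f : ι → L) :
    ⁅x, ∑ i ∈ s, f i⁆ = ∑ i ∈ s, ⁅x, f i⁆ :=
  map_sum (AddMonoidHom.mk' (fun y => ⁅x, y⁆) (lie_add x)) f s

/-! ### piW computation lemmas -/

lemma piW_zero_cons (b : ℕ) (l : List ℕ) :
    piW (0 :: b :: l) = piW ((b :: l).map (· - 1)) := by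
  rw [piW]; simp

lemma piW_eq_neg (a b : ℕ) (l : List ℕ) (ha : a ≠ 0)
    (h : (a :: b :: l).getLast? = some 0) :
    piW (a :: b :: l) = - piW ((a :: b :: l).dropLast.map (· - 1)) := by
  rw [piW, if_neg ha, if_pos h]

lemma piW_eq_zero (a b : ℕ) (l : List ℕ) (ha : a ≠ 0)
    (h : (a :: b :: l).getLast? ≠ some 0) :
    piW (a :: b :: l) = 0 := by
  rw [piW, if_neg ha, if_neg h]

lemma piW_concat_zero (a : ℕ) (l : List ℕ) (ha : a ≠ 0) :
    piW ((a :: l) ++ [0]) = - piW ((a :: l).map (· - 1)) := by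
  cases l with
  | nil =>
    rw [show (a :: ([] : List ℕ)) ++ [0] = [a, 0] from rfl]
    rw [piW_eq_neg a 0 [] ha (by simp)]
    rfl
  | cons b l' =>
    have h1 : (a :: b :: (l' ++ [0])).getLast? = some 0 := by
      rw [show a :: b :: (l' ++ [0]) = (a :: b :: l') ++ [0] from rfl,
        List.getLast?_concat]
    rw [show (a :: b :: l') ++ [0] = a :: b :: (l' ++ [0]) from rfl,
      piW_eq_neg a b (l' ++ [0]) ha h1,
      show a :: b :: (l' ++ [0]) = (a :: b :: l') ++ [0] from rfl,
      List.dropLast_concat]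

lemma getLast?_ofFn {α : Type*} {k : ℕ} (g : Fin (k + 1) → α) :
    (List.ofFn g).getLast? = some (g (Fin.last k)) := by
  rw [List.ofFn_succ', List.concat_eq_append, List.getLast?_concat]

/-! ### Fin / permutation helpers -/

lemma fin_castSucc_add_one {n : ℕ} (i : Fin n) :
    (i.castSucc : Fin (n + 1)) + 1 = i.succ := by
  apply Fin.ext
  simp [Fin.add_def, Nat.mod_eq_of_lt (Nat.succ_lt_succ i.isLt)]

lemma fin_last_add_one (n : ℕ) : (Fin.last n : Fin (n + 1)) + 1 = 0 := by
  apply Fin.ext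
  simp [Fin.add_def]

/-- The permutation of `Fin (n+1)` fixing `0` and acting as `e` (shifted) elsewhere. -/
def embA {n : ℕ} (e : Perm (Fin n)) : Perm (Fin (n + 1)) :=
  Equiv.Perm.decomposeFin.symm (0, e)

@[simp] lemma embA_zero {n : ℕ} (e : Perm (Fin n)) : embA e 0 = 0 :=
  Equiv.Perm.decomposeFin_symm_apply_zero 0 e

@[simp] lemma embA_succ {n : ℕ} (e : Perm (Fin n)) (i : Fin n) :
    embA e i.succ = (e i).succ := by
  simp [embA, Equiv.Perm.decomposeFin_symm_apply_succ]

/-- The permutation of `Fin (n+1)` sending the last position to `0` and acting as `e`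
(shifted) on earlier positions. -/
def embB {n : ℕ} (e : Perm (Fin n)) : Perm (Fin (n + 1)) :=
  embA e * finRotate (n + 1)

@[simp] lemma embB_castSucc {n : ℕ} (e : Perm (Fin n)) (i : Fin n) :
    embB e i.castSucc = (e i).succ := by
  simp [embB, Perm.mul_apply, finRotate_succ_apply, fin_castSucc_add_one]

@[simp] lemma embB_last {n : ℕ} (e : Perm (Fin n)) : embB e (Fin.last n) = 0 := by
  simp [embB, Perm.mul_apply, finRotate_succ_apply, fin_last_add_one]

lemma decomposeFin_fst {n : ℕ} (σ : Perm (Fin (n + 1))) :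
    (Equiv.Perm.decomposeFin σ).1 = σ 0 := by
  conv_rhs => rw [← Equiv.symm_apply_apply Equiv.Perm.decomposeFin σ]
  rw [show Equiv.Perm.decomposeFin σ =
      ((Equiv.Perm.decomposeFin σ).1, (Equiv.Perm.decomposeFin σ).2) from rfl]
  rw [Equiv.Perm.decomposeFin_symm_apply_zero]

lemma embA_left_inv {n : ℕ} (σ : Perm (Fin (n + 1))) (hσ : σ 0 = 0) :
    embA (Equiv.Perm.decomposeFin σ).2 = σ := by
  unfold embA
  rw [← hσ, ← decomposeFin_fst, Prod.mk.eta, Equiv.symm_apply_apply]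

@[simp] lemma embA_right_inv {n : ℕ} (e : Perm (Fin n)) :
    (Equiv.Perm.decomposeFin (embA e)).2 = e := by
  unfold embA
  rw [Equiv.apply_symm_apply]

lemma finRotate_inv_zero (n : ℕ) : (finRotate (n + 1))⁻¹ 0 = Fin.last n := by
  have h : finRotate (n + 1) (Fin.last n) = 0 := by
    rw [finRotate_succ_apply, fin_last_add_one]
  rw [← h, Equiv.Perm.inv_def, Equiv.symm_apply_apply]

/-- Inverse of `embB` on permutations sending the last position to `0`. -/
def eB {n : ℕ} (σ : Perm (Fin (n + 1))) : Perm (Fin n) :=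
  (Equiv.Perm.decomposeFin (σ * (finRotate (n + 1))⁻¹)).2

lemma embB_left_inv {n : ℕ} (σ : Perm (Fin (n + 1))) (hσ : σ (Fin.last n) = 0) :
    embB (eB σ) = σ := by
  unfold embB eB
  rw [embA_left_inv (σ * (finRotate (n + 1))⁻¹)
    (by rw [Perm.mul_apply, finRotate_inv_zero]; exact hσ)]
  group

@[simp] lemma embB_right_inv {n : ℕ} (e : Perm (Fin n)) : eB (embB e) = e := by
  unfold eB embB
  rw [mul_inv_cancel_right, embA_right_inv]

/-! ### Words of the embedded permutations -/

lemma word_embA {α : Type*} {n : ℕ} (e : Perm (Fin n)) (g : Fin (n + 1) → α) :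
    (List.ofFn fun j => g (embA e j)) = g 0 :: List.ofFn (fun i => g (e i).succ) := by
  rw [List.ofFn_succ]
  simp

lemma word_embB {α : Type*} {n : ℕ} (e : Perm (Fin n)) (g : Fin (n + 1) → α) :
    (List.ofFn fun j => g (embB e j)) =
      (List.ofFn fun i => g (e i).succ) ++ [g 0] := by
  rw [List.ofFn_succ', List.concat_eq_append]
  simp

/-! ### piPerm of the embedded permutations -/

lemma piPerm_ofFn {k : ℕ} (σ : Perm (Fin k)) :
    piPerm σ = piW (List.ofFn fun j => ((σ j : Fin k) : ℕ)) := by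
  rw [piPerm, ← List.ofFn_eq_map]

lemma piPerm_embA {n : ℕ} (e : Perm (Fin (n + 1))) :
    piPerm (embA e) = piPerm e := by
  rw [piPerm_ofFn, piPerm_ofFn]
  rw [word_embA e (fun j => (j : ℕ))]
  simp only [Fin.val_zero, Fin.val_succ]
  rw [List.ofFn_succ]
  rw [piW_zero_cons]
  congr 1
  rw [List.ofFn_succ (f := fun j => ((e j : Fin (n + 1)) : ℕ))]
  simp [List.map_ofFn, Function.comp_def]

lemma piPerm_embB {n : ℕ} (e : Perm (Fin (n + 1))) :
    piPerm (embB e) = - piPerm e := by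
  rw [piPerm_ofFn, piPerm_ofFn]
  rw [word_embB e (fun j => (j : ℕ))]
  simp only [Fin.val_zero, Fin.val_succ]
  rw [List.ofFn_succ (f := fun i => ((e i : Fin (n + 1)) : ℕ) + 1)]
  rw [piW_concat_zero _ _ (Nat.succ_ne_zero _)]
  congr 1
  rw [List.ofFn_succ (f := fun j => ((e j : Fin (n + 1)) : ℕ))]
  simp [List.map_ofFn, Function.comp_def]

lemma piPerm_vanish {n : ℕ} (σ : Perm (Fin (n + 2)))
    (h0 : σ 0 ≠ 0) (hl : σ (Fin.last (n + 1)) ≠ 0) : piPerm σ = 0 := by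
  have hlast : (List.ofFn fun j => ((σ j : Fin (n + 2)) : ℕ)).getLast? =
      some ((σ (Fin.last (n + 1)) : Fin (n + 2)) : ℕ) := getLast?_ofFn _
  rw [piPerm_ofFn]
  rw [List.ofFn_succ, List.ofFn_succ] at hlast ⊢
  apply piW_eq_zero _ _ _
  · intro h
    exact h0 (Fin.ext (by simpa using h))
  · rw [hlast]
    intro h
    apply hl
    apply Fin.ext
    simpa using h

/-! ### The splitting of the permutation sum -/

lemma sum_split {M : Type*} [AddCommGroup M] {n : ℕ}
    (F : Perm (Fin (n + 2)) → M)
    (h0 : ∀ σ : Perm (Fin (n + 2)), σ 0 ≠ 0 → σ (Fin.last (n + 1)) ≠ 0 → F σ = 0) :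
    ∑ σ : Perm (Fin (n + 2)), F σ =
      (∑ e : Perm (Fin (n + 1)), F (embA e)) +
        ∑ e : Perm (Fin (n + 1)), F (embB e) := by
  classical
  rw [← Finset.sum_filter_add_sum_filter_not Finset.univ (fun σ => σ 0 = 0) F]
  congr 1
  · -- permutations fixing `0`
    refine Finset.sum_nbij' (fun σ => (Equiv.Perm.decomposeFin σ).2) (fun e => embA e)
      ?_ ?_ ?_ ?_ ?_
    · intro a _; exact Finset.mem_univ _
    · intro e _
      simp only [Finset.mem_filter, Finset.mem_univ, true_and]
      exact embA_zero e
    · intro σ hσ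
      simp only [Finset.mem_filter, Finset.mem_univ, true_and] at hσ
      exact embA_left_inv σ hσ
    · intro e _; exact embA_right_inv e
    · intro σ hσ
      simp only [Finset.mem_filter, Finset.mem_univ, true_and] at hσ
      rw [embA_left_inv σ hσ]
  · -- permutations not fixing `0`
    rw [← Finset.sum_filter_add_sum_filter_not
      (Finset.filter (fun σ => ¬ σ 0 = 0) Finset.univ)
      (fun σ => σ (Fin.last (n + 1)) = 0) F]
    have hz : ∑ σ ∈ Finset.filter (fun σ => ¬ σ (Fin.last (n + 1)) = 0)
        (Finset.filter (fun σ => ¬ σ 0 = 0) Finset.univ), F σ = 0 := by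
      apply Finset.sum_eq_zero
      intro σ hσ
      simp only [Finset.mem_filter, Finset.mem_univ, true_and] at hσ
      exact h0 σ hσ.1 hσ.2
    rw [hz, add_zero]
    refine Finset.sum_nbij' (fun σ => eB σ) (fun e => embB e) ?_ ?_ ?_ ?_ ?_
    · intro a _; exact Finset.mem_univ _
    · intro e _
      simp only [Finset.mem_filter, Finset.mem_univ, true_and]
      constructor
      · rw [show (0 : Fin (n + 2)) = (Fin.castSucc 0) from rfl, embB_castSucc]
        exact Fin.succ_ne_zero _
      · exact embB_last e
    · intro σ hσ
      simp only [Finset.mem_filter, Finset.mem_univ, true_and] at hσ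
      exact embB_left_inv σ hσ.2
    · intro e _; exact embB_right_inv e
    · intro σ hσ
      simp only [Finset.mem_filter, Finset.mem_univ, true_and] at hσ
      rw [embB_left_inv σ hσ.2]

/-! ### Generalized Jacobi, first form -/

lemma lemA : ∀ (n : ℕ) (f : Fin n → L) (a : L),
    ∑ σ : Perm (Fin n), piPerm σ • adList (List.ofFn fun j => f (σ j)) a
      = ⁅nestedBracket (List.ofFn f), a⁆ := by
  intro n
  induction n with
  | zero =>
    intro f a
    rw [Fintype.sum_subsingleton _ (1 : Perm (Fin 0))]
    have : piPerm (1 : Perm (Fin 0)) = 0 := by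
      simp [piPerm, piW]
    rw [this, zero_smul]
    show (0 : L) = ⁅nestedBracket ([] : List L), a⁆
    rw [show nestedBracket ([] : List L) = 0 from rfl, zero_lie]
  | succ n ih =>
    cases n with
    | zero =>
      intro f a
      rw [Fintype.sum_subsingleton _ (1 : Perm (Fin 1))]
      have h1 : piPerm (1 : Perm (Fin 1)) = 1 := by
        simp [piPerm, List.finRange_succ, piW]
      rw [h1, one_smul]
      show adList [f ((1 : Perm (Fin 1)) 0)] a = ⁅nestedBracket [f 0], a⁆
      rw [show ((1 : Perm (Fin 1)) 0) = 0 from Subsingleton.elim _ _]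
      rfl
    | succ n =>
      intro f a
      rw [sum_split _ (fun σ hσ0 hσl => by rw [piPerm_vanish σ hσ0 hσl, zero_smul])]
      have hA : (∑ e : Perm (Fin (n + 1)),
          piPerm (embA e) • adList (List.ofFn fun j => f (embA e j)) a)
          = ⁅f 0, ⁅nestedBracket (List.ofFn fun i => f i.succ), a⁆⁆ := by
        have : ∀ e : Perm (Fin (n + 1)),
            piPerm (embA e) • adList (List.ofFn fun j => f (embA e j)) a
              = ⁅f 0, piPerm e • adList (List.ofFn fun i => f ((e i).succ)) a⁆ := by
          intro e
          rw [piPerm_embA, word_embA e f, adList_cons, lie_zsmul]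
        rw [Finset.sum_congr rfl (fun e _ => this e), ← lie_sum',
          ih (fun i => f i.succ) a]
      have hB : (∑ e : Perm (Fin (n + 1)),
          piPerm (embB e) • adList (List.ofFn fun j => f (embB e j)) a)
          = - ⁅nestedBracket (List.ofFn fun i => f i.succ), ⁅f 0, a⁆⁆ := by
        have : ∀ e : Perm (Fin (n + 1)),
            piPerm (embB e) • adList (List.ofFn fun j => f (embB e j)) a
              = - (piPerm e • adList (List.ofFn fun i => f ((e i).succ)) ⁅f 0, a⁆) := by
          intro e
          rw [piPerm_embB, word_embB e f, adList_concat, neg_smul]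
        rw [Finset.sum_congr rfl (fun e _ => this e), Finset.sum_neg_distrib,
          ih (fun i => f i.succ) ⁅f 0, a⁆]
      rw [hA, hB]
      rw [List.ofFn_succ (f := f),
        nestedBracket_cons_of_ne_nil (f 0) _ (by rw [List.ofFn_succ]; simp),
        lie_lie]
      abel

/-! ### Generalized Jacobi, second form -/

lemma lemB : ∀ (n : ℕ) (f : Fin n → L),
    (n : ℤ) • nestedBracket (List.ofFn f)
      = ∑ σ : Perm (Fin n), piPerm σ • nestedBracket (List.ofFn fun j => f (σ j)) := by
  intro n
  induction n with
  | zero =>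
    intro f
    rw [Fintype.sum_subsingleton _ (1 : Perm (Fin 0))]
    have : piPerm (1 : Perm (Fin 0)) = 0 := by simp [piPerm, piW]
    rw [this, zero_smul]
    simp
  | succ n ih =>
    cases n with
    | zero =>
      intro f
      rw [Fintype.sum_subsingleton _ (1 : Perm (Fin 1))]
      have h1 : piPerm (1 : Perm (Fin 1)) = 1 := by
        simp [piPerm, List.finRange_succ, piW]
      rw [h1, one_smul]
      show (1 : ℤ) • nestedBracket [f 0] = nestedBracket [f ((1 : Perm (Fin 1)) 0)]
      rw [show ((1 : Perm (Fin 1)) 0) = 0 from Subsingleton.elim _ _, one_smul]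
    | succ n =>
      intro f
      rw [sum_split _ (fun σ hσ0 hσl => by rw [piPerm_vanish σ hσ0 hσl, zero_smul])]
      set Y : L := nestedBracket (List.ofFn fun i => f i.succ) with hY
      have hA : (∑ e : Perm (Fin (n + 1)),
          piPerm (embA e) • nestedBracket (List.ofFn fun j => f (embA e j)))
          = ((n : ℤ) + 1) • ⁅f 0, Y⁆ := by
        have : ∀ e : Perm (Fin (n + 1)),
            piPerm (embA e) • nestedBracket (List.ofFn fun j => f (embA e j))
              = ⁅f 0, piPerm e • nestedBracket (List.ofFn fun i => f ((e i).succ))⁆ := by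
          intro e
          rw [piPerm_embA, word_embA e f,
            nestedBracket_cons_of_ne_nil _ _ (by rw [List.ofFn_succ]; simp),
            lie_zsmul]
        rw [Finset.sum_congr rfl (fun e _ => this e), ← lie_sum',
          ← ih (fun i => f i.succ), hY.symm, lie_zsmul]
        push_cast
        ring_nf
      have hB : (∑ e : Perm (Fin (n + 1)),
          piPerm (embB e) • nestedBracket (List.ofFn fun j => f (embB e j)))
          = ⁅f 0, Y⁆ := by
        have : ∀ e : Perm (Fin (n + 1)),
            piPerm (embB e) • nestedBracket (List.ofFn fun j => f (embB e j))
              = - (piPerm e • adList (List.ofFn fun i => f ((e i).succ)) (f 0)) := by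
          intro e
          rw [piPerm_embB, word_embB e f, nestedBracket_concat, neg_smul]
        rw [Finset.sum_congr rfl (fun e _ => this e), Finset.sum_neg_distrib,
          lemA (n + 1) (fun i => f i.succ) (f 0), hY.symm, ← lie_skew, neg_neg]
      rw [hA, hB]
      rw [List.ofFn_succ (f := f),
        nestedBracket_cons_of_ne_nil (f 0) _ (by rw [List.ofFn_succ]; simp), ← hY]
      have : ((n : ℤ) + 1) • ⁅f 0, Y⁆ + ⁅f 0, Y⁆ = ((n : ℤ) + 2) • ⁅f 0, Y⁆ := by
        rw [add_smul, add_smul, one_smul, two_smul]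
        abel
      rw [this]
      norm_cast

end GJAux

/-- generalized Jacobi identity, second form:
`ℓ · X_v = Σ_{σ ∈ S_ℓ} π_ℓ(σ) X_{σ(v)}`. -/
theorem generalized_jacobi_second {L : Type*} [LieRing L] [LieAlgebra ℝ L]
    {m ℓ : ℕ} (hℓ : 2 ≤ ℓ) (X : Fin m → L) (v : Fin ℓ → Fin m) :
    (ℓ : ℤ) • nestedBracket ((List.finRange ℓ).map fun j => X (v j)) =
      ∑ σ : Equiv.Perm (Fin ℓ),
        piPerm σ • nestedBracket ((List.finRange ℓ).map fun j => X (v (σ j))) := by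
  have h := GJAux.lemB ℓ (fun j => X (v j))
  simpa [← List.ofFn_eq_map] using h
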